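/- Let g, h : ℝ^N → ℝ^{2n} be functions of a real parameter s admitting convergent expansions v_g(s) = G s^{o_g} + o(s^{o_g}) and v_h(s) = H s^{o_h} + o(s^{o_h}) with G, H ∈ ℝ^{2n} \ {0} and o_g, o_h ∈ ℤ. If G and H are linearly independent over ℝ, then the limit as s → 0 (s ≠ 0) of the orthogonal complement (span_ℝ{v_g(s), v_h(s)})^⊥ (a codimension-2 subspace of ℝ^{2n} for small s ≠ 0) exists in the Grassmannian and equals (span_ℝ{G, H})^⊥ = G^⊥ ∩ H^⊥. -/

import Mathlib

open Filter Topology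

lemma gram_solve (a b c p q : ℝ) (hd : a * c - b * b ≠ 0) :
    p - ((c * p - b * q) / (a * c - b * b)) * a
      - ((a * q - b * p) / (a * c - b * b)) * b = 0 ∧
    q - ((c * p - b * q) / (a * c - b * b)) * b
      - ((a * q - b * p) / (a * c - b * b)) * c = 0 := by
  constructor <;> (rw [div_mul_eq_mul_div, div_mul_eq_mul_div, sub_sub, ← add_div, sub_eq_zero, eq_div_iff hd]; ring)

/-- if `v_g(s) = G s^{o_g} + o(s^{o_g})` and `v_h(s) = H s^{o_h} + o(s^{o_h})`
with `G, H` linearly independent over `ℝ`, then the orthogonal complements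
`span{v_g(s), v_h(s)}^⊥` converge (in the Kuratowski sense, which is convergence in the
Grassmannian of codimension-2 subspaces) to `span{G, H}^⊥ = G^⊥ ∩ H^⊥`:
(1) any limit of a curve of vectors orthogonal to `v_g(s)` and `v_h(s)` is orthogonal to
`G` and `H`; and (2) any vector orthogonal to `G` and `H` is such a limit. -/
theorem limit_orthogonal_complements {n : ℕ}
    (vg vh : ℝ → EuclideanSpace ℝ (Fin (2 * n)))
    (G H : EuclideanSpace ℝ (Fin (2 * n))) (hG : G ≠ 0) (hH : H ≠ 0)
    (hGH : LinearIndependent ℝ ![G, H]) (og oh : ℤ)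
    (hvg : Tendsto (fun s : ℝ => (s ^ og)⁻¹ • vg s) (𝓝[≠] (0 : ℝ)) (𝓝 G))
    (hvh : Tendsto (fun s : ℝ => (s ^ oh)⁻¹ • vh s) (𝓝[≠] (0 : ℝ)) (𝓝 H)) :
    (∀ u : ℝ → EuclideanSpace ℝ (Fin (2 * n)),
      (∀ᶠ s in 𝓝[≠] (0 : ℝ),
        inner ℝ (u s) (vg s) = 0 ∧ inner ℝ (u s) (vh s) = 0) →
      ∀ L, Tendsto u (𝓝[≠] (0 : ℝ)) (𝓝 L) →
        inner ℝ L G = 0 ∧ inner ℝ L H = 0) ∧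
    (∀ L : EuclideanSpace ℝ (Fin (2 * n)),
      inner ℝ L G = 0 → inner ℝ L H = 0 →
      ∃ u : ℝ → EuclideanSpace ℝ (Fin (2 * n)),
        Tendsto u (𝓝[≠] (0 : ℝ)) (𝓝 L) ∧
        ∀ᶠ s in 𝓝[≠] (0 : ℝ),
          inner ℝ (u s) (vg s) = 0 ∧ inner ℝ (u s) (vh s) = 0) := by
  have hne : ∀ᶠ s in 𝓝[≠] (0 : ℝ), s ≠ 0 := eventually_mem_nhdsWithin
  set V1 : ℝ → EuclideanSpace ℝ (Fin (2 * n)) := fun s => (s ^ og)⁻¹ • vg s with hV1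
  set V2 : ℝ → EuclideanSpace ℝ (Fin (2 * n)) := fun s => (s ^ oh)⁻¹ • vh s with hV2
  constructor
  · intro u hu L hL
    have key : ∀ (v : ℝ → EuclideanSpace ℝ (Fin (2 * n)))
        (W : EuclideanSpace ℝ (Fin (2 * n))) (o : ℤ),
        Tendsto (fun s : ℝ => (s ^ o)⁻¹ • v s) (𝓝[≠] (0 : ℝ)) (𝓝 W) →
        (∀ᶠ s in 𝓝[≠] (0 : ℝ), (inner ℝ (u s) (v s) : ℝ) = 0) →
        (inner ℝ L W : ℝ) = 0 := by
      intro v W o hv horth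
      have h1 : Tendsto (fun s : ℝ => (inner ℝ (u s) ((s ^ o)⁻¹ • v s) : ℝ))
          (𝓝[≠] (0 : ℝ)) (𝓝 (inner ℝ L W)) := hL.inner hv
      have h2 : (fun s : ℝ => (inner ℝ (u s) ((s ^ o)⁻¹ • v s) : ℝ))
          =ᶠ[𝓝[≠] (0 : ℝ)] fun _ => (0 : ℝ) := by
        filter_upwards [horth] with s hs
        rw [real_inner_smul_right, hs, mul_zero]
      exact tendsto_nhds_unique (h1.congr' h2) tendsto_const_nhds
    exact ⟨key vg G og hvg (hu.mono fun s hs => hs.1),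
           key vh H oh hvh (hu.mono fun s hs => hs.2)⟩
  · intro L hLG hLH
    have hta : Tendsto (fun s => (inner ℝ (V1 s) (V1 s) : ℝ)) (𝓝[≠] (0 : ℝ))
        (𝓝 (inner ℝ G G : ℝ)) := hvg.inner hvg
    have htb : Tendsto (fun s => (inner ℝ (V1 s) (V2 s) : ℝ)) (𝓝[≠] (0 : ℝ))
        (𝓝 (inner ℝ G H : ℝ)) := hvg.inner hvh
    have htc : Tendsto (fun s => (inner ℝ (V2 s) (V2 s) : ℝ)) (𝓝[≠] (0 : ℝ))
        (𝓝 (inner ℝ H H : ℝ)) := hvh.inner hvh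
    have htp : Tendsto (fun s => (inner ℝ (V1 s) L : ℝ)) (𝓝[≠] (0 : ℝ)) (𝓝 (0 : ℝ)) := by
      have : Tendsto (fun s => (inner ℝ (V1 s) L : ℝ)) (𝓝[≠] (0 : ℝ)) (𝓝 (inner ℝ G L : ℝ)) :=
        hvg.inner tendsto_const_nhds
      rwa [real_inner_comm, hLG] at this
    have htq : Tendsto (fun s => (inner ℝ (V2 s) L : ℝ)) (𝓝[≠] (0 : ℝ)) (𝓝 (0 : ℝ)) := by
      have : Tendsto (fun s => (inner ℝ (V2 s) L : ℝ)) (𝓝[≠] (0 : ℝ)) (𝓝 (inner ℝ H L : ℝ)) :=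
        hvh.inner tendsto_const_nhds
      rwa [real_inner_comm, hLH] at this
    set d : ℝ → ℝ := fun s =>
      (inner ℝ (V1 s) (V1 s) : ℝ) * (inner ℝ (V2 s) (V2 s) : ℝ)
        - (inner ℝ (V1 s) (V2 s) : ℝ) * (inner ℝ (V1 s) (V2 s) : ℝ) with hd
    set D : ℝ := (inner ℝ G G : ℝ) * (inner ℝ H H : ℝ) - (inner ℝ G H : ℝ) * (inner ℝ G H : ℝ)
      with hD
    have htd : Tendsto d (𝓝[≠] (0 : ℝ)) (𝓝 D) := (hta.mul htc).sub (htb.mul htb)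
    -- strict Cauchy–Schwarz: D > 0
    have hpair := linearIndependent_fin2.mp hGH
    simp only [Matrix.cons_val_one, Matrix.head_cons, Matrix.cons_val_zero] at hpair
    have hnH : ‖H‖ ≠ 0 := norm_ne_zero_iff.mpr hH
    have key2 : ∀ t : ℝ, ‖H‖ • G ≠ t • H := by
      intro t hctr
      exact hpair.2 (‖H‖⁻¹ * t)
        (by rw [mul_smul, ← hctr, smul_smul, inv_mul_cancel₀ hnH, one_smul])
    have h1 : (inner ℝ G H : ℝ) < ‖G‖ * ‖H‖ :=
      inner_lt_norm_mul_iff_real.mpr (key2 ‖G‖)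
    have h2 : -(inner ℝ G H : ℝ) < ‖G‖ * ‖H‖ := by
      have := inner_lt_norm_mul_iff_real (F := EuclideanSpace ℝ (Fin (2 * n)))
        (x := -G) (y := H)
      rw [inner_neg_left, norm_neg] at this
      refine this.mpr ?_
      intro hctr
      exact key2 (-‖G‖) (by
        rw [smul_neg] at hctr
        rw [neg_smul, ← hctr, neg_neg])
    have hDpos : 0 < D := by
      rw [hD, real_inner_self_eq_norm_mul_norm, real_inner_self_eq_norm_mul_norm]
      nlinarith [h1, h2]
    have hdne : ∀ᶠ s in 𝓝[≠] (0 : ℝ), d s ≠ 0 := htd.eventually_ne hDpos.ne'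
    -- the corrected curve
    refine ⟨fun s => L - (((inner ℝ (V2 s) (V2 s) : ℝ) * (inner ℝ (V1 s) L : ℝ)
        - (inner ℝ (V1 s) (V2 s) : ℝ) * (inner ℝ (V2 s) L : ℝ)) / d s) • V1 s
        - (((inner ℝ (V1 s) (V1 s) : ℝ) * (inner ℝ (V2 s) L : ℝ)
        - (inner ℝ (V1 s) (V2 s) : ℝ) * (inner ℝ (V1 s) L : ℝ)) / d s) • V2 s, ?_, ?_⟩
    · have hα : Tendsto (fun s => ((inner ℝ (V2 s) (V2 s) : ℝ) * (inner ℝ (V1 s) L : ℝ)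
          - (inner ℝ (V1 s) (V2 s) : ℝ) * (inner ℝ (V2 s) L : ℝ)) / d s) (𝓝[≠] (0 : ℝ))
          (𝓝 (((inner ℝ H H : ℝ) * 0 - (inner ℝ G H : ℝ) * 0) / D)) :=
        ((htc.mul htp).sub (htb.mul htq)).div htd hDpos.ne'
      have hβ : Tendsto (fun s => ((inner ℝ (V1 s) (V1 s) : ℝ) * (inner ℝ (V2 s) L : ℝ)
          - (inner ℝ (V1 s) (V2 s) : ℝ) * (inner ℝ (V1 s) L : ℝ)) / d s) (𝓝[≠] (0 : ℝ))
          (𝓝 (((inner ℝ G G : ℝ) * 0 - (inner ℝ G H : ℝ) * 0) / D)) :=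
        ((hta.mul htq).sub (htb.mul htp)).div htd hDpos.ne'
      have := (tendsto_const_nhds (x := L)).sub (hα.smul hvg) |>.sub (hβ.smul hvh)
      simpa using this
    · filter_upwards [hne, hdne] with s hs hds
      simp only [hd] at hds ⊢
      have hvg' : vg s = (s ^ og) • V1 s := by
        rw [hV1]
        simp only [smul_smul, mul_inv_cancel₀ (zpow_ne_zero og hs), one_smul]
      have hvh' : vh s = (s ^ oh) • V2 s := by
        rw [hV2]
        simp only [smul_smul, mul_inv_cancel₀ (zpow_ne_zero oh hs), one_smul]
      have hsolve := gram_solve (inner ℝ (V1 s) (V1 s)) (inner ℝ (V1 s) (V2 s))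
        (inner ℝ (V2 s) (V2 s)) (inner ℝ (V1 s) L) (inner ℝ (V2 s) L) hds
      constructor
      · rw [hvg', real_inner_smul_right]
        apply mul_eq_zero_of_right
        simp only [inner_sub_left, real_inner_smul_left]
        rw [real_inner_comm (V1 s) L, real_inner_comm (V1 s) (V2 s)]
        exact hsolve.1
      · rw [hvh', real_inner_smul_right]
        apply mul_eq_zero_of_right
        simp only [inner_sub_left, real_inner_smul_left]
        rw [real_inner_comm (V2 s) L]
        exact hsolve.2
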